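/- Let p ≡ 1 (mod 5) be prime, set t := (p−1)/5, and let T be a generator of the group of multiplicative characters of F_p. Then, as complex numbers, Σ_{w} ∏_{i=1}^{5} g(T^{w_i t}) = 50·p·Σ_{i=1}^{4} g(T^{it})^2·g(T^{3it}) + Σ_{i=1}^{4} g(T^{it})^5, where the outer sum on the left runs over all tuples w = (w_1, w_2, w_3, w_4, w_5) with each w_i ∈ {1, 2, 3, 4} and w_1 + w_2 + w_3 + w_4 + w_5 ≡ 0 (mod 5). -/

import Mathlib

open Finset

private lemma step5 (n : ℕ) (F : (Fin (n+1) → Fin 4) → ℂ) :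
    ∑ w, F w = ∑ x : Fin 4, ∑ w : Fin n → Fin 4, F (Matrix.vecCons x w) := by
  rw [← Equiv.sum_comp (Fin.consEquiv fun _ => Fin 4) F, Fintype.sum_prod_type]
  rfl

private lemma base5 (F : (Fin 0 → Fin 4) → ℂ) : ∑ w, F w = F ![] := by
  rw [Fintype.sum_unique]; congr 1

private lemma vv3 : ((3 : Fin 4) : ℕ) = 3 := rfl
private lemma vv2 : ((2 : Fin 4) : ℕ) = 2 := rfl

set_option maxHeartbeats 4000000 in
private lemma key5 (a b c d P : ℂ) (h1 : a*d = P) (h2 : b*c = P) :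
    ∑ w ∈ Finset.univ.filter
        (fun w : Fin 5 → Fin 4 => (∑ i, ((w i : ℕ) + 1)) % 5 = 0),
        ∏ i, ![a,b,c,d] (w i) =
      50*P*(a^2*c + b^2*a + c^2*d + d^2*b) + (a^5+b^5+c^5+d^5) := by
  rw [Finset.sum_filter]
  simp only [step5, base5, Fin.sum_univ_five, Fin.prod_univ_five,
    Matrix.cons_val_zero, Matrix.cons_val_one, Matrix.head_cons,
    Matrix.cons_val_two, Matrix.tail_cons, Matrix.cons_val_three, Matrix.cons_val_four]
  norm_num [Fin.sum_univ_four, vv2, vv3]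
  simp only [show ![a,b,c,d] 2 = c from rfl, show ![a,b,c,d] 3 = d from rfl]
  linear_combination (30*a^2*c + 20*a*b^2 + 20*c^2*d + 30*b*d^2)*(h2 - h1)
    + 50*(a^2*c + b^2*a + c^2*d + d^2*b)*h1

/-- For `p ≡ 1 (mod 5)`, `t = (p-1)/5` and `T` a generator of the character group,
the sum of `∏_{i=1}^5 g(T^{wᵢt})` over all tuples `w` with `wᵢ ∈ {1,2,3,4}` and
`w₁+⋯+w₅ ≡ 0 (mod 5)` equals `50 p Σ_{i=1}^4 g(T^{it})² g(T^{3it}) + Σ_{i=1}^4 g(T^{it})⁵`.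
(Each `wᵢ ∈ {1,2,3,4}` is encoded as `(w i : ℕ) + 1` with `w i : Fin 4`.) -/
theorem sum_over_W_eq (p : ℕ) [Fact p.Prime] (hp : p % 5 = 1)
    (θ : AddChar (ZMod p) ℂ) (hθ : θ ≠ 1)
    (T : MulChar (ZMod p) ℂ) (hT : ∀ χ : MulChar (ZMod p) ℂ, ∃ k : ℕ, χ = T ^ k)
    (t : ℕ) (ht : t = (p - 1) / 5) :
    ∑ w ∈ Finset.univ.filter
        (fun w : Fin 5 → Fin 4 => (∑ i, ((w i : ℕ) + 1)) % 5 = 0),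
        ∏ i, gaussSum (T ^ (((w i : ℕ) + 1) * t)) θ =
      50 * (p : ℂ) *
          ∑ i ∈ Finset.Icc 1 4, gaussSum (T ^ (i * t)) θ ^ 2 * gaussSum (T ^ (3 * i * t)) θ +
        ∑ i ∈ Finset.Icc 1 4, gaussSum (T ^ (i * t)) θ ^ 5 := by
  have hprime : p.Prime := Fact.out
  have hp11 : 11 ≤ p := by
    by_contra h
    push_neg at h
    interval_cases p <;> first | omega | norm_num at hprime
  have h5t : 5 * t = p - 1 := by omega
  have ht0 : 0 < t := by omega
  -- T ^ (5 * t) = 1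
  have hT5 : T ^ (5 * t) = 1 := by
    apply MulChar.ext
    intro u
    rw [MulChar.pow_apply_coe, MulChar.one_apply_coe, ← map_pow, h5t,
      ZMod.pow_card_sub_one_eq_one (Units.ne_zero u), map_one]
  -- nontriviality of T ^ (i*t), 0 < i < 5
  have hnt : ∀ i : ℕ, 0 < i → i < 5 → T ^ (i * t) ≠ 1 := by
    intro i hi0 hi5 hcon
    obtain ⟨u, hu⟩ := IsCyclic.exists_generator (α := (ZMod p)ˣ)
    have hou : orderOf u = p - 1 := by
      rw [orderOf_eq_card_of_forall_mem_zpowers hu, Nat.card_eq_fintype_card, ZMod.card_units]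
    have hne : ((u : ZMod p) ^ (i * t)) ≠ 1 := by
      intro h
      have h' : (u ^ (i * t)) = 1 := Units.ext (by push_cast; exact h)
      have hdvd := orderOf_dvd_of_pow_eq_one h'
      rw [hou] at hdvd
      have hle : p - 1 ≤ i * t := Nat.le_of_dvd (by positivity) hdvd
      have : i * t ≤ 4 * t := Nat.mul_le_mul_right t (by omega)
      omega
    haveI : NeZero ((Monoid.exponent (ZMod p)ˣ : ℕ) : ℂ) :=
      ⟨Nat.cast_ne_zero.mpr Monoid.exponent_ne_zero_of_finite⟩
    obtain ⟨χ, hχ⟩ := MulChar.exists_apply_ne_one_of_hasEnoughRootsOfUnity (ZMod p) ℂ hne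
    obtain ⟨k, rfl⟩ := hT χ
    apply hχ
    rw [map_pow, ← MulChar.pow_apply' _ (Nat.mul_ne_zero (by omega) (by omega)), ← pow_mul, mul_comm k, pow_mul,
      hcon, one_pow, MulChar.one_apply_coe]
  -- values at -1 are 1
  have hm1 : ∀ i : ℕ, (T ^ (i * t)) (-1 : ZMod p) = 1 := by
    intro i
    set x := (T ^ (i * t)) (-1 : ZMod p) with hx
    have h2 : x ^ 2 = 1 := by
      rw [hx, ← map_pow]
      norm_num
    have h5 : x ^ 5 = 1 := by
      rw [hx, ← MulChar.pow_apply' _ (by norm_num : (5:ℕ) ≠ 0), ← pow_mul,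
        show i * t * 5 = 5 * t * i by ring, pow_mul, hT5, one_pow]
      rw [show (-1 : ZMod p) = ((-1 : (ZMod p)ˣ) : ZMod p) by simp, MulChar.one_apply_coe]
    linear_combination h5 - x * (x ^ 2 + 1) * h2
  -- Gauss sum pairs
  have hpair : ∀ i : ℕ, 0 < i → i < 5 →
      gaussSum (T ^ (i * t)) θ * gaussSum (T ^ ((5 - i) * t)) θ = (p : ℂ) := by
    intro i h0 h5
    have hχ : T ^ (i * t) ≠ 1 := hnt i h0 h5
    have hinv : (T ^ (i * t))⁻¹ = T ^ ((5 - i) * t) := by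
      rw [eq_comm, eq_inv_iff_mul_eq_one, ← pow_add,
        show (5 - i) * t + i * t = 5 * t by
          rw [← add_mul]; congr 1; omega,
        hT5]
    have hprim : θ.IsPrimitive := AddChar.IsPrimitive.of_ne_one hθ
    have hmain := gaussSum_mul_gaussSum_eq_card hχ hprim
    rw [hinv] at hmain
    have hg : gaussSum (T ^ ((5 - i) * t)) θ⁻¹ = gaussSum (T ^ ((5 - i) * t)) θ := by
      have h := mul_gaussSum_inv_eq_gaussSum (T ^ ((5 - i) * t)) θ
      rwa [hm1 (5 - i), one_mul] at h
    rw [hg, ZMod.card] at hmain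
    exact hmain
  have h1 := hpair 1 (by norm_num) (by norm_num)
  have h2 := hpair 2 (by norm_num) (by norm_num)
  norm_num at h1 h2
  have e6 : T ^ (6 * t) = T ^ t := by
    rw [show 6 * t = t + 5 * t by ring, pow_add, hT5, mul_one]
  have e9 : T ^ (9 * t) = T ^ (4 * t) := by
    rw [show 9 * t = 4 * t + 5 * t by ring, pow_add, hT5, mul_one]
  have e12 : T ^ (12 * t) = T ^ (2 * t) := by
    rw [show 12 * t = 2 * t + 5 * t + 5 * t by ring, pow_add, pow_add, hT5, mul_one, mul_one]
  have hG : ∀ v : Fin 4, gaussSum (T ^ (((v : ℕ) + 1) * t)) θ =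
      ![gaussSum (T ^ t) θ, gaussSum (T ^ (2 * t)) θ,
        gaussSum (T ^ (3 * t)) θ, gaussSum (T ^ (4 * t)) θ] v := by
    intro v
    fin_cases v <;> norm_num
  have hL : ∑ w ∈ Finset.univ.filter
        (fun w : Fin 5 → Fin 4 => (∑ i, ((w i : ℕ) + 1)) % 5 = 0),
        ∏ i, gaussSum (T ^ (((w i : ℕ) + 1) * t)) θ =
      ∑ w ∈ Finset.univ.filter
        (fun w : Fin 5 → Fin 4 => (∑ i, ((w i : ℕ) + 1)) % 5 = 0),
        ∏ i, ![gaussSum (T ^ t) θ, gaussSum (T ^ (2 * t)) θ,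
          gaussSum (T ^ (3 * t)) θ, gaussSum (T ^ (4 * t)) θ] (w i) :=
    Finset.sum_congr rfl fun w _ => Finset.prod_congr rfl fun i _ => hG (w i)
  rw [hL, key5 _ _ _ _ _ h1 h2]
  have hIcc : ∀ f : ℕ → ℂ, ∑ i ∈ Finset.Icc 1 4, f i = f 1 + f 2 + f 3 + f 4 := by
    intro f
    rw [show Finset.Icc 1 4 = ({1, 2, 3, 4} : Finset ℕ) by decide]
    simp [Finset.sum_insert]
    ring
  simp only [hIcc, one_mul, show 3*1 = 3 from rfl, show 3*2 = 6 from rfl,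
    show 3*3 = 9 from rfl, show 3*4 = 12 from rfl, e6, e9, e12]
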